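/- arXiv:math/0009016 — 2 statements merged into one kernel-verified Lean document; each statement's English description precedes it below -/
import Mathlib

section
/- Let R be a commutative ring, let a be a unit of R, let S be an associative unital R-algebra, and let b be a unit of S satisfying the Kauffman quadratic relation a⁻¹·b² + (a² − a⁻²)·b − a·1 = 0. Set λ = a⁴ + a⁻⁴ and let c = b ⊗ b⁻¹ in the R-algebra S ⊗_R S. Then c satisfies the cubic relation c³ = (1 − λ)·c² + (λ − 1)·c + 1. -/
open scoped TensorProduct

/-- Lemma 1 of the paper (algebraic form): if a unit `b` of an associative unital
`R`-algebra `S` satisfies the Kauffman quadratic relation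
`a⁻¹·b² + (a² − a⁻²)·b − a·1 = 0` for a unit `a` of `R`, and `λ = a⁴ + a⁻⁴`,
then `c = b ⊗ b⁻¹` in `S ⊗[R] S` satisfies `c³ = (1 − λ)·c² + (λ − 1)·c + 1`. -/
theorem kauffman_tensor_cubic_relation
    (R : Type*) [CommRing R] (S : Type*) [Ring S] [Algebra R S]
    (a : Rˣ) (b : Sˣ)
    (hb : (↑a⁻¹ : R) • ((b : S) ^ 2) + ((a : R) ^ 2 - (↑a⁻¹ : R) ^ 2) • (b : S)
            - (a : R) • (1 : S) = 0)
    (lam : R) (hlam : lam = (a : R) ^ 4 + (↑a⁻¹ : R) ^ 4)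
    (c : S ⊗[R] S) (hc : c = (b : S) ⊗ₜ[R] (↑b⁻¹ : S)) :
    c ^ 3 = (1 - lam) • c ^ 2 + (lam - 1) • c + 1 := by
  set x : R := (a : R) with hx
  set y : R := (↑a⁻¹ : R) with hy
  have hxy : x * y = 1 := a.mul_inv
  set p : S := (b : S) with hp
  set q : S := (↑b⁻¹ : S) with hq
  have hpq : p * q = 1 := b.mul_inv
  have hqp : q * p = 1 := b.inv_mul
  -- rearranged quadratic: y • p^2 = x • 1 - (x^2 - y^2) • p
  have hb' : y • p ^ 2 = x • (1 : S) - (x ^ 2 - y ^ 2) • p := by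
    have := hb; linear_combination (norm := module) this
  -- p^2 in terms of 1, p
  have hp2 : p ^ 2 = (x * x) • (1 : S) - (x * (x ^ 2 - y ^ 2)) • p := by
    calc p ^ 2 = (x * y) • p ^ 2 := by rw [hxy, one_smul]
    _ = x • (y • p ^ 2) := by rw [mul_smul]
    _ = x • (x • (1 : S) - (x ^ 2 - y ^ 2) • p) := by rw [hb']
    _ = _ := by module
  -- q in terms of 1, p (auxiliary): x • q = y • p + (x^2-y^2) • 1
  have hxq : x • q = y • p + (x ^ 2 - y ^ 2) • (1 : S) := by
    have h := congrArg (· * q) hb'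
    simp only [smul_mul_assoc, sub_mul, one_mul] at h
    have hpsq : p ^ 2 * q = p := by
      rw [pow_two, mul_assoc, hpq, mul_one]
    rw [hpsq, hpq] at h
    linear_combination (norm := module) -h
  -- q^2 in terms of 1, q
  have hq2 : q ^ 2 = (y * y) • (1 : S) + (y * (x ^ 2 - y ^ 2)) • q := by
    have h := congrArg (· * q ^ 2) hb'
    simp only [smul_mul_assoc, sub_mul, one_mul] at h
    have h1 : p ^ 2 * q ^ 2 = 1 := by
      rw [pow_two, pow_two, mul_assoc, ← mul_assoc p q q, hpq, one_mul, hpq]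
    have h2 : p * q ^ 2 = q := by rw [pow_two, ← mul_assoc, hpq, one_mul]
    rw [h1, h2] at h
    calc q ^ 2 = (y * x) • q ^ 2 := by rw [mul_comm, hxy, one_smul]
    _ = y • (x • q ^ 2) := by rw [mul_smul]
    _ = y • (y • (1:S) + (x ^ 2 - y ^ 2) • q) := by
        congr 1
        linear_combination (norm := module) -h
    _ = _ := by module

  -- cubes
  have hp3 : p ^ 3 = (-(x*(x^2-y^2)*(x*x))) • (1 : S)
      + (x*x + (x*(x^2-y^2))*(x*(x^2-y^2))) • p := by
    have h3 : p ^ 3 = p * p ^ 2 := by rw [pow_succ']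
    rw [h3, hp2, mul_sub, mul_smul_comm, mul_smul_comm, mul_one, ← pow_two p, hp2]
    module
  have hq3 : q ^ 3 = ((y*(x^2-y^2))*(y*y)) • (1 : S)
      + (y*y + (y*(x^2-y^2))*(y*(x^2-y^2))) • q := by
    have h3 : q ^ 3 = q * q ^ 2 := by rw [pow_succ']
    rw [h3, hq2, mul_add, mul_smul_comm, mul_smul_comm, mul_one, ← pow_two q, hq2]
    module
  have e3 : (p ⊗ₜ[R] q) ^ 3
      = ((-(x*(x^2-y^2)*(x*x))) * ((y*(x^2-y^2))*(y*y))) • ((1:S) ⊗ₜ[R] (1:S))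
      + ((-(x*(x^2-y^2)*(x*x))) * (y*y + (y*(x^2-y^2))*(y*(x^2-y^2)))) • ((1:S) ⊗ₜ[R] q)
      + ((x*x + (x*(x^2-y^2))*(x*(x^2-y^2))) * ((y*(x^2-y^2))*(y*y))) • (p ⊗ₜ[R] (1:S))
      + ((x*x + (x*(x^2-y^2))*(x*(x^2-y^2))) * (y*y + (y*(x^2-y^2))*(y*(x^2-y^2)))) • (p ⊗ₜ[R] q) := by
    rw [Algebra.TensorProduct.tmul_pow, hp3, hq3]
    simp only [TensorProduct.add_tmul, TensorProduct.tmul_add, ← TensorProduct.smul_tmul',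
      TensorProduct.tmul_smul, smul_smul]
    module
  have e2 : (p ⊗ₜ[R] q) ^ 2
      = ((x*x) * (y*y)) • ((1:S) ⊗ₜ[R] (1:S))
      + ((x*x) * (y*(x^2-y^2))) • ((1:S) ⊗ₜ[R] q)
      + ((-(x*(x^2-y^2))) * (y*y)) • (p ⊗ₜ[R] (1:S))
      + ((-(x*(x^2-y^2))) * (y*(x^2-y^2))) • (p ⊗ₜ[R] q) := by
    rw [Algebra.TensorProduct.tmul_pow, hp2, hq2]
    simp only [TensorProduct.add_tmul, TensorProduct.tmul_add, TensorProduct.sub_tmul,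
      TensorProduct.tmul_sub, ← TensorProduct.smul_tmul', TensorProduct.tmul_smul, smul_smul]
    module
  subst hlam hc
  rw [e3, e2, Algebra.TensorProduct.one_def]
  match_scalars
  · linear_combination (1 + x*y + 2*x^2*y^2 - x^2*y^6 + 2*x^3*y^3 + 2*x^4*y^4 - x^6*y^2) * hxy
  · linear_combination (-(x^2*y^3) + x^2*y^7 - 2*x^3*y^4 + x^4*y - 3*x^4*y^5 + 2*x^5*y^2 + 3*x^6*y^3 - x^8*y) * hxy
  · linear_combination (x*y^4 - x*y^8 + 2*x^2*y^5 - x^3*y^2 + 3*x^3*y^6 - 2*x^4*y^3 - 3*x^5*y^4 + x^7*y^2) * hxy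
  · linear_combination (-1 + y^4 - x*y + x*y^9 - 2*x^2*y^2 - 2*x^2*y^6 - 4*x^3*y^7 + x^4 + 4*x^4*y^4 + 6*x^5*y^5 - 2*x^6*y^2 - 4*x^7*y^3 + x^9*y) * hxy
end

section
/- Let R be a commutative ring, let a be a unit of R, and let x and y be elements of R each satisfying the Kauffman quadratic relation (that is, a⁻¹·x² + (a² − a⁻²)·x − a = 0 and a⁻¹·y² + (a² − a⁻²)·y − a = 0), with y a unit. Set λ = a⁴ + a⁻⁴ and z = x·y⁻¹. Then z³ = (1 − λ)·z² + (λ − 1)·z + 1. -/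
/-- Commutative (eigenvalue) form of Lemma 1: if `x` and `y` in a commutative ring
`R` each satisfy the Kauffman quadratic relation `a⁻¹·w² + (a² − a⁻²)·w − a = 0`
for a unit `a`, with `y` a unit, then `z = x·y⁻¹` satisfies
`z³ = (1 − λ)·z² + (λ − 1)·z + 1` where `λ = a⁴ + a⁻⁴`. -/
theorem kauffman_ratio_cubic_relation
    (R : Type*) [CommRing R] (a : Rˣ) (x : R) (y : Rˣ)
    (hx : (↑a⁻¹ : R) * x ^ 2 + ((a : R) ^ 2 - (↑a⁻¹ : R) ^ 2) * x - (a : R) = 0)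
    (hy : (↑a⁻¹ : R) * (y : R) ^ 2 + ((a : R) ^ 2 - (↑a⁻¹ : R) ^ 2) * (y : R) - (a : R) = 0)
    (lam : R) (hlam : lam = (a : R) ^ 4 + (↑a⁻¹ : R) ^ 4)
    (z : R) (hz : z = x * (↑y⁻¹ : R)) :
    z ^ 3 = (1 - lam) * z ^ 2 + (lam - 1) * z + 1 := by
  set u : R := (↑a⁻¹ : R) with hu
  set b : R := (↑y⁻¹ : R) with hbdef
  have ha : (a : R) * u = 1 := by
    rw [hu]; exact_mod_cast a.mul_inv
  have hb : (y : R) * b = 1 := by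
    rw [hbdef]; exact_mod_cast y.mul_inv
  have hx2 : x ^ 2 = (u - (a:R) ^ 3) * x + (a:R) ^ 2 := by
    linear_combination (a : R) * hx + (u * x - x ^ 2) * ha
  have hy2 : (y : R) ^ 2 = (u - (a:R) ^ 3) * (y : R) + (a:R) ^ 2 := by
    linear_combination (a : R) * hy + (u * (y:R) - (y:R) ^ 2) * ha
  subst hlam hz
  set s : R := u - (a:R) ^ 3 with hs
  have key : x ^ 3 = (1 - ((a:R) ^ 4 + u ^ 4)) * x ^ 2 * (y:R)
      + (((a:R) ^ 4 + u ^ 4) - 1) * x * (y:R) ^ 2 + (y:R) ^ 3 := by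
    linear_combination (x + s - (1 - ((a:R) ^ 4 + u ^ 4)) * (y:R)) * hx2
      + (-((((a:R) ^ 4 + u ^ 4)) - 1) * x - (y:R) - s) * hy2
      + (x - (y:R)) * (-2 * (a:R) ^ 2 - u ^ 3 * (a:R) - u ^ 2) * ha
  linear_combination b ^ 3 * key
    + ((1 - ((a:R) ^ 4 + u ^ 4)) * x ^ 2 * b ^ 2
      + (((a:R) ^ 4 + u ^ 4) - 1) * x * b * ((y:R) * b + 1)
      + (y:R) ^ 2 * b ^ 2 + (y:R) * b + 1) * hb
end
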